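/- Let T > 0 and let 0 < α ≤ 1 and 0 < γ ≤ 1 be Hölder exponents with γ > 1 − α. Let S : [0,T] → ℝ be α-Hölder continuous and let π : [0,T] → ℝ be γ-Hölder continuous. Then the Riemann–Stieltjes integral ∫₀ᵀ π dS exists: there is a real number I such that for every ε > 0 there exists δ > 0 such that for every partition 0 = t₀ < t₁ < ⋯ < tₙ = T with mesh max_i (t_{i+1} − t_i) < δ and every choice of tags ξ_i ∈ [t_i, t_{i+1}], one has |∑_{i=0}^{n−1} π(ξ_i)(S(t_{i+1}) − S(t_i)) − I| < ε. -/

import Mathlib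

open Finset

/-- Bernoulli-based bound: partial sums of `∑ (k+1)^(-θ)` are at most `θ/(θ-1)` for `1 < θ ≤ 2`. -/
private lemma yk_series (θ : ℝ) (hθ : 1 < θ) (hθ2 : θ ≤ 2) (n : ℕ) :
    ∑ k ∈ Finset.range n, ((k : ℝ) + 1) ^ (-θ) ≤ θ / (θ - 1) := by
  have hq0 : 0 < θ - 1 := by linarith
  have key : ∀ m : ℕ, 1 ≤ m →
      ∑ k ∈ Finset.range m, ((k : ℝ) + 1) ^ (-θ) ≤ θ / (θ - 1) - ((m : ℝ)) ^ (1 - θ) / (θ - 1) := by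
    intro m hm
    induction m with
    | zero => omega
    | succ m ih =>
      rcases Nat.eq_or_lt_of_le hm with h1 | h1
      · -- m + 1 = 1
        have : m = 0 := by omega
        subst this
        rw [Finset.sum_range_one]
        norm_num
        have h2 : θ / (θ - 1) - (θ - 1)⁻¹ = 1 := by
          field_simp
        linarith [h2]
      · have hm1 : 1 ≤ m := by omega
        have ih' := ih hm1
        rw [Finset.sum_range_succ]
        -- need: ((m:ℝ)+1)^(-θ) ≤ ((m:ℝ))^(1-θ)/(θ-1) - ((m:ℝ)+1)^(1-θ)/(θ-1)
        have hmpos : (0 : ℝ) < m := by exact_mod_cast hm1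
        have hx : (0 : ℝ) < (m : ℝ) + 1 := by linarith
        set x : ℝ := (m : ℝ) + 1 with hxdef
        set q : ℝ := θ - 1 with hqdef
        have hq1 : q ≤ 1 := by simp [hqdef]; linarith
        have hqpos : 0 < q := hq0
        -- Bernoulli: (1 - 1/x)^q ≤ 1 - q/x
        have hber : (1 + (-(1/x))) ^ q ≤ 1 + q * (-(1/x)) :=
          rpow_one_add_le_one_add_mul_self
            (by have h1 : 1/x ≤ 1 := by rw [div_le_one hx]; linarith
                linarith) hqpos.le hq1
        have h1x : (0:ℝ) < 1/x := one_div_pos.mpr hx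
        have hqx : q / x < 1 := by
          rw [div_lt_one hx]; simp only [hxdef]; linarith
        -- A := m^q, B := x^q
        set A : ℝ := (m : ℝ) ^ q with hA
        set B : ℝ := x ^ q with hB
        have hApos : 0 < A := Real.rpow_pos_of_pos hmpos q
        have hBpos : 0 < B := Real.rpow_pos_of_pos hx q
        have hmx : (m : ℝ) = x - 1 := by simp [hxdef]
        have hAB : A ≤ B * (1 - q/x) := by
          have h : ((m:ℝ)/x) ^ q ≤ 1 - q/x := by
            have : (m:ℝ)/x = 1 + (-(1/x)) := by field_simp; ring
            rw [this]
            calc (1 + (-(1/x))) ^ q ≤ 1 + q * (-(1/x)) := hber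
            _ = 1 - q/x := by ring
          have hdiv : ((m:ℝ)/x) ^ q = A / B := Real.div_rpow hmpos.le hx.le q
          rw [hdiv, div_le_iff₀ hBpos] at h
          linarith [h]
        -- main step inequality: A*(x+q) ≤ B*x
        have hstep : A * (x + q) ≤ B * x := by
          have : A * (x + q) ≤ B * (1 - q/x) * (x + q) := by
            apply mul_le_mul_of_nonneg_right hAB; positivity
          calc A * (x + q) ≤ B * (1 - q/x) * (x + q) := this
            _ = B * x - B * q^2 / x := by field_simp; ring
            _ ≤ B * x := by
                have : 0 ≤ B * q^2 / x := by positivity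
                linarith
        -- translate to rpow statement
        have hxq : x ^ (-θ) = 1 / (B * x) := by
          rw [show -θ = -q + (-1) by rw [hqdef]; ring, Real.rpow_add hx, Real.rpow_neg_one,
            Real.rpow_neg hx.le]
          field_simp
          exact hB
        have hx1q : x ^ (1 - θ) = 1 / B := by
          rw [show (1:ℝ) - θ = -q by rw [hqdef]; ring, Real.rpow_neg hx.le]
          field_simp
          exact hB
        have hm1q : (m:ℝ) ^ (1 - θ) = 1 / A := by
          rw [show (1:ℝ) - θ = -q by rw [hqdef]; ring, Real.rpow_neg hmpos.le]
          field_simp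
          exact hA
        have goal2 : x ^ (-θ) ≤ (m:ℝ) ^ (1-θ) / q - x ^ (1-θ) / q := by
          rw [hxq, hx1q, hm1q]
          rw [div_div, div_div, div_sub_div _ _ (by positivity : A*q ≠ 0) (by positivity : B*q ≠ 0),
            div_le_div_iff₀ (by positivity) (by positivity)]
          have hBA : A * q ≤ (B - A) * x := by nlinarith [hstep]
          nlinarith [mul_le_mul_of_nonneg_left hBA (by positivity : (0:ℝ) ≤ B * q)]
        push_cast
        calc ∑ k ∈ Finset.range m, ((k : ℝ) + 1) ^ (-θ) + ((m:ℝ) + 1) ^ (-θ)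
            ≤ (θ / (θ - 1) - ((m : ℝ)) ^ (1 - θ) / (θ - 1)) + ((m:ℝ)) ^ (1-θ) / q - ((m:ℝ)+1) ^ (1-θ)/q := by
              have := goal2
              rw [← hxdef] at *
              linarith
          _ = θ / (θ - 1) - ((m:ℝ)+1) ^ (1 - θ) / (θ - 1) := by rw [hqdef]; ring
  cases n with
  | zero => simp; positivity
  | succ m =>
    calc ∑ k ∈ Finset.range (m+1), ((k : ℝ) + 1) ^ (-θ)
        ≤ θ / (θ - 1) - ((m+1 : ℕ) : ℝ) ^ (1 - θ) / (θ - 1) := key (m+1) (by omega)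
      _ ≤ θ / (θ - 1) := by
          have : (0:ℝ) ≤ ((m+1 : ℕ) : ℝ) ^ (1 - θ) / (θ - 1) := by positivity
          linarith



private lemma yk_mono (t : ℕ → ℝ) (n : ℕ) (h : ∀ i < n, t i < t (i + 1)) :
    ∀ i j : ℕ, i ≤ j → j ≤ n → t i ≤ t j := by
  intro i j hij hjn
  induction j with
  | zero => simp_all
  | succ j ih =>
    rcases Nat.eq_or_lt_of_le hij with heq | hlt
    · exact le_of_eq (by rw [heq])
    · exact le_trans (ih (by omega) (by omega)) (h j (by omega)).le

private lemma yk_blocks (f : ℕ → ℝ) (σ : ℕ → ℕ) (N : ℕ) (hσ : ∀ i < N, σ i < σ (i + 1)) :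
    ∑ j ∈ Finset.Ico (σ 0) (σ N), f j
      = ∑ i ∈ Finset.range N, ∑ j ∈ Finset.Ico (σ i) (σ (i + 1)), f j := by
  induction N with
  | zero => simp
  | succ N ih =>
    have hmono : ∀ i j : ℕ, i ≤ j → j ≤ N + 1 → σ i ≤ σ j := by
      intro i j hij hjn
      induction j with
      | zero => simp_all
      | succ j ih2 =>
        rcases Nat.eq_or_lt_of_le hij with rfl | hlt
        · exact le_refl _
        · exact le_trans (ih2 (by omega) (by omega)) (hσ j (by omega)).le
    rw [Finset.sum_range_succ, ← ih (fun i hi => hσ i (by omega)),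
      Finset.sum_Ico_consecutive f (hmono 0 N (by omega) (by omega))
        (hmono N (N + 1) (by omega) (by omega))]

private lemma yk_local (T : ℝ) (S π : ℝ → ℝ) (C D α γ : ℝ) (hC : 0 ≤ C) (hD : 0 ≤ D)
    (hα0 : 0 < α) (hγ0 : 0 < γ)
    (hS : ∀ x ∈ Set.Icc (0:ℝ) T, ∀ y ∈ Set.Icc (0:ℝ) T, |S x - S y| ≤ D * |x - y| ^ α)
    (hπ : ∀ x ∈ Set.Icc (0:ℝ) T, ∀ y ∈ Set.Icc (0:ℝ) T, |π x - π y| ≤ C * |x - y| ^ γ) :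
    ∀ n : ℕ, ∀ t : ℕ → ℝ, (∀ i ≤ n, t i ∈ Set.Icc (0:ℝ) T) → (∀ i < n, t i < t (i + 1)) →
      |(∑ i ∈ Finset.range n, π (t i) * (S (t (i + 1)) - S (t i)))
          - π (t 0) * (S (t n) - S (t 0))|
        ≤ C * D * 2 ^ (α + γ) * (∑ k ∈ Finset.range (n - 1), ((k : ℝ) + 1) ^ (-(α + γ)))
            * (t n - t 0) ^ (α + γ) := by
  intro n
  induction n with
  | zero =>
    intro t _ _
    simp
  | succ m ih =>
    intro t hmem hlt
    rcases Nat.eq_zero_or_pos m with rfl | hm1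
    · simp
    -- choose the interior point j'+1 (0 ≤ j' < m) with small combined gap
    set L : ℝ := t (m + 1) - t 0 with hL
    have hLpos : 0 < L := by
      have := yk_mono t (m + 1) hlt 0 m (by omega) (by omega)
      have := hlt m (by omega)
      simp only [hL]; linarith
    have hsum_le : ∑ j' ∈ Finset.range m, (t (j' + 2) - t j')
        ≤ ∑ j' ∈ Finset.range m, 2 * L / m := by
      have e1 : ∑ j' ∈ Finset.range m, (t (j' + 2) - t (j' + 1)) = t (m + 1) - t 1 :=
        Finset.sum_range_sub (fun i => t (i + 1)) m
      have e2 : ∑ j' ∈ Finset.range m, (t (j' + 1) - t j') = t m - t 0 :=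
        Finset.sum_range_sub t m
      have e3 : ∑ j' ∈ Finset.range m, (t (j' + 2) - t j')
          = (t (m + 1) - t 1) + (t m - t 0) := by
        rw [← e1, ← e2, ← Finset.sum_add_distrib]
        exact Finset.sum_congr rfl (fun i _ => by ring)
      have h01 : t 0 ≤ t 1 := (hlt 0 (by omega)).le
      have hmm : t m ≤ t (m + 1) := (hlt m (by omega)).le
      rw [e3, Finset.sum_const, Finset.card_range, nsmul_eq_mul]
      have hm0 : (m:ℝ) ≠ 0 := by exact_mod_cast (by omega : m ≠ 0)
      have hmm2 : (m:ℝ) * (2 * L / m) = 2 * L := by field_simp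
      rw [hmm2]
      simp only [hL]; linarith
    obtain ⟨j', hj'mem, hj'⟩ := Finset.exists_le_of_sum_le ⟨0, Finset.mem_range.mpr hm1⟩ hsum_le
    have hj'm : j' < m := Finset.mem_range.mp hj'mem
    -- the reduced partition
    set t' : ℕ → ℝ := fun i => if i < j' + 1 then t i else t (i + 1) with ht'
    have ht'0 : t' 0 = t 0 := by simp [ht']
    have ht'm : t' m = t (m + 1) := by
      simp only [ht']; rw [if_neg (by omega)]
    have ht'mem : ∀ i ≤ m, t' i ∈ Set.Icc (0:ℝ) T := by
      intro i hi
      simp only [ht']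
      split
      · exact hmem i (by omega)
      · exact hmem (i + 1) (by omega)
    have ht'lt : ∀ i < m, t' i < t' (i + 1) := by
      intro i hi
      simp only [ht']
      rcases lt_trichotomy (i + 1) (j' + 1) with h | h | h
      · rw [if_pos (by omega), if_pos h]; exact hlt i (by omega)
      · rw [if_pos (by omega), if_neg (by omega)]
        exact lt_trans (hlt i (by omega)) (hlt (i + 1) (by omega))
      · rw [if_neg (by omega), if_neg (by omega)]
        exact hlt (i + 1) (by omega)
    have IH := ih t' ht'mem ht'lt
    -- sum decomposition
    set g : ℕ → ℝ := fun i => π (t i) * (S (t (i + 1)) - S (t i)) with hg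
    have e1 : ∑ i ∈ Finset.range (m + 1), g i
        = ((∑ i ∈ Finset.Ico 0 j', g i) + (g j' + g (j' + 1)))
          + ∑ i ∈ Finset.Ico (j' + 2) (m + 1), g i := by
      rw [Finset.range_eq_Ico,
        ← Finset.sum_Ico_consecutive g (by omega : 0 ≤ j' + 2) (by omega : j' + 2 ≤ m + 1),
        ← Finset.sum_Ico_consecutive g (by omega : 0 ≤ j') (by omega : j' ≤ j' + 2)]
      congr 1
      rw [Finset.sum_Ico_succ_top (by omega : j' ≤ j' + 1),
        Finset.sum_Ico_succ_top (by omega : j' ≤ j'), Finset.Ico_self, Finset.sum_empty, zero_add]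
    have e2 : ∑ i ∈ Finset.range m, π (t' i) * (S (t' (i + 1)) - S (t' i))
        = ((∑ i ∈ Finset.Ico 0 j', g i) + π (t j') * (S (t (j' + 2)) - S (t j')))
          + ∑ i ∈ Finset.Ico (j' + 2) (m + 1), g i := by
      set g' : ℕ → ℝ := fun i => π (t' i) * (S (t' (i + 1)) - S (t' i)) with hg'
      have p1 : ∑ i ∈ Finset.Ico 0 j', g' i = ∑ i ∈ Finset.Ico 0 j', g i :=
        Finset.sum_congr rfl (fun i hi => by
          have hi' : i < j' := (Finset.mem_Ico.mp hi).2
          simp only [hg', hg, ht']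
          rw [if_pos (by omega), if_pos (by omega)])
      have p2 : ∑ i ∈ Finset.Ico j' (j' + 1), g' i
          = π (t j') * (S (t (j' + 2)) - S (t j')) := by
        rw [Finset.sum_Ico_succ_top (by omega : j' ≤ j'), Finset.Ico_self, Finset.sum_empty,
          zero_add]
        simp only [hg', ht']
        rw [if_pos (by omega), if_neg (by omega)]
      have p3 : ∑ i ∈ Finset.Ico (j' + 1) m, g' i
          = ∑ i ∈ Finset.Ico (j' + 2) (m + 1), g i := by
        rw [Finset.sum_Ico_eq_sum_range, Finset.sum_Ico_eq_sum_range]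
        apply Finset.sum_congr (by congr 1; omega)
        intro i _
        simp only [hg', hg, ht']
        rw [if_neg (by omega), if_neg (by omega)]
        have ha : j' + 1 + i + 1 = j' + 2 + i := by omega
        rw [ha]
      rw [Finset.range_eq_Ico,
        ← Finset.sum_Ico_consecutive g' (by omega : 0 ≤ j' + 1) (by omega : j' + 1 ≤ m),
        ← Finset.sum_Ico_consecutive g' (by omega : 0 ≤ j') (by omega : j' ≤ j' + 1),
        p1, p2, p3]
    have key : (∑ i ∈ Finset.range (m + 1), g i) - π (t 0) * (S (t (m + 1)) - S (t 0))
        = ((∑ i ∈ Finset.range m, π (t' i) * (S (t' (i + 1)) - S (t' i)))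
            - π (t' 0) * (S (t' m) - S (t' 0)))
          + (π (t (j' + 1)) - π (t j')) * (S (t (j' + 2)) - S (t (j' + 1))) := by
      rw [e1, e2, ht'0, ht'm]
      simp only [hg]
      ring
    -- estimate the removal cost
    have hb : 0 < t (j' + 2) - t j' := by
      have h1 := hlt j' (by omega)
      have h2 := hlt (j' + 1) (by omega)
      linarith
    have hcost : |(π (t (j' + 1)) - π (t j')) * (S (t (j' + 2)) - S (t (j' + 1)))|
        ≤ C * D * 2 ^ (α + γ) * ((m : ℝ)) ^ (-(α + γ)) * L ^ (α + γ) := by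
      have h1 := hlt j' (by omega)
      have h2 := hlt (j' + 1) (by omega)
      have hπb := hπ (t (j' + 1)) (hmem _ (by omega)) (t j') (hmem _ (by omega))
      have hSb := hS (t (j' + 2)) (hmem _ (by omega)) (t (j' + 1)) (hmem _ (by omega))
      have hπb' : |π (t (j' + 1)) - π (t j')| ≤ C * (t (j' + 2) - t j') ^ γ := by
        refine hπb.trans (mul_le_mul_of_nonneg_left ?_ hC)
        rw [abs_of_pos (by linarith : (0:ℝ) < t (j' + 1) - t j')]
        exact Real.rpow_le_rpow (by linarith) (by linarith) hγ0.le
      have hSb' : |S (t (j' + 2)) - S (t (j' + 1))| ≤ D * (t (j' + 2) - t j') ^ α := by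
        refine hSb.trans (mul_le_mul_of_nonneg_left ?_ hD)
        rw [abs_of_pos (by linarith : (0:ℝ) < t (j' + 2) - t (j' + 1))]
        exact Real.rpow_le_rpow (by linarith) (by linarith) hα0.le
      rw [abs_mul]
      calc |π (t (j' + 1)) - π (t j')| * |S (t (j' + 2)) - S (t (j' + 1))|
          ≤ (C * (t (j' + 2) - t j') ^ γ) * (D * (t (j' + 2) - t j') ^ α) := by
            apply mul_le_mul hπb' hSb' (abs_nonneg _) (by positivity)
        _ = C * D * (t (j' + 2) - t j') ^ (α + γ) := by
            rw [Real.rpow_add hb]; ring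
        _ ≤ C * D * (2 * L / m) ^ (α + γ) := by
            apply mul_le_mul_of_nonneg_left _ (by positivity)
            exact Real.rpow_le_rpow hb.le hj' (by positivity)
        _ = C * D * 2 ^ (α + γ) * ((m : ℝ)) ^ (-(α + γ)) * L ^ (α + γ) := by
            have hmpos : (0:ℝ) < m := by exact_mod_cast hm1
            rw [Real.div_rpow (by positivity) hmpos.le, Real.mul_rpow (by norm_num) hLpos.le,
              Real.rpow_neg hmpos.le, div_eq_mul_inv]
            ring
    -- combine
    have hL' : t' m - t' 0 = L := by rw [ht'0, ht'm]
    rw [key]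
    have series_split : ∑ k ∈ Finset.range (m + 1 - 1), ((k : ℝ) + 1) ^ (-(α + γ))
        = (∑ k ∈ Finset.range (m - 1), ((k : ℝ) + 1) ^ (-(α + γ)))
          + ((m : ℝ)) ^ (-(α + γ)) := by
      have : m + 1 - 1 = (m - 1) + 1 := by omega
      rw [this, Finset.sum_range_succ]
      congr 2
      have : ((m - 1 : ℕ) : ℝ) = (m : ℝ) - 1 := by
        have : (1:ℕ) ≤ m := hm1
        push_cast [this]; ring
      rw [this]; ring
    calc |((∑ i ∈ Finset.range m, π (t' i) * (S (t' (i + 1)) - S (t' i)))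
            - π (t' 0) * (S (t' m) - S (t' 0)))
          + (π (t (j' + 1)) - π (t j')) * (S (t (j' + 2)) - S (t (j' + 1)))|
        ≤ |(∑ i ∈ Finset.range m, π (t' i) * (S (t' (i + 1)) - S (t' i)))
            - π (t' 0) * (S (t' m) - S (t' 0))|
          + |(π (t (j' + 1)) - π (t j')) * (S (t (j' + 2)) - S (t (j' + 1)))| := abs_add_le _ _
      _ ≤ C * D * 2 ^ (α + γ) * (∑ k ∈ Finset.range (m - 1), ((k : ℝ) + 1) ^ (-(α + γ)))
            * (t' m - t' 0) ^ (α + γ)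
          + C * D * 2 ^ (α + γ) * ((m : ℝ)) ^ (-(α + γ)) * L ^ (α + γ) := add_le_add IH hcost
      _ = C * D * 2 ^ (α + γ) * (∑ k ∈ Finset.range (m + 1 - 1), ((k : ℝ) + 1) ^ (-(α + γ)))
            * (t (m + 1) - t 0) ^ (α + γ) := by
          rw [hL', series_split, ← hL]; ring

private lemma yk_monoN (σ : ℕ → ℕ) (n : ℕ) (h : ∀ i < n, σ i < σ (i + 1)) :
    ∀ i j : ℕ, i ≤ j → j ≤ n → σ i ≤ σ j := by
  intro i j hij hjn
  induction j with
  | zero => simp_all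
  | succ j ih =>
    rcases Nat.eq_or_lt_of_le hij with heq | hlt
    · exact le_of_eq (by rw [heq])
    · exact le_trans (ih (by omega) (by omega)) (h j (by omega)).le

private lemma yk_local2 (T : ℝ) (S π : ℝ → ℝ) (C D α γ : ℝ) (hC : 0 ≤ C) (hD : 0 ≤ D)
    (hα0 : 0 < α) (hγ0 : 0 < γ) (hθ1 : 1 < α + γ) (hθ2 : α + γ ≤ 2)
    (hS : ∀ x ∈ Set.Icc (0:ℝ) T, ∀ y ∈ Set.Icc (0:ℝ) T, |S x - S y| ≤ D * |x - y| ^ α)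
    (hπ : ∀ x ∈ Set.Icc (0:ℝ) T, ∀ y ∈ Set.Icc (0:ℝ) T, |π x - π y| ≤ C * |x - y| ^ γ)
    (n : ℕ) (t : ℕ → ℝ) (hmem : ∀ i ≤ n, t i ∈ Set.Icc (0:ℝ) T)
    (hlt : ∀ i < n, t i < t (i + 1)) :
    |(∑ i ∈ Finset.range n, π (t i) * (S (t (i + 1)) - S (t i)))
        - π (t 0) * (S (t n) - S (t 0))|
      ≤ (C * D * 2 ^ (α + γ) * ((α + γ) / (α + γ - 1))) * (t n - t 0) ^ (α + γ) := by
  refine (yk_local T S π C D α γ hC hD hα0 hγ0 hS hπ n t hmem hlt).trans ?_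
  have hx : (0:ℝ) ≤ (t n - t 0) ^ (α + γ) := by
    have := yk_mono t n hlt 0 n (by omega) (le_refl n)
    exact Real.rpow_nonneg (by linarith) _
  have hser := yk_series (α + γ) hθ1 hθ2 (n - 1)
  have h2 : (0:ℝ) ≤ C * D * 2 ^ (α + γ) := by positivity
  calc C * D * 2 ^ (α + γ) * (∑ k ∈ Finset.range (n - 1), ((k : ℝ) + 1) ^ (-(α + γ)))
        * (t n - t 0) ^ (α + γ)
      ≤ C * D * 2 ^ (α + γ) * ((α + γ) / (α + γ - 1)) * (t n - t 0) ^ (α + γ) := by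
        apply mul_le_mul_of_nonneg_right _ hx
        exact mul_le_mul_of_nonneg_left hser h2
    _ = _ := rfl

private lemma yk_refine (T : ℝ) (S π : ℝ → ℝ) (C D α γ : ℝ) (hC : 0 ≤ C) (hD : 0 ≤ D)
    (hα0 : 0 < α) (hγ0 : 0 < γ) (hθ1 : 1 < α + γ) (hθ2 : α + γ ≤ 2)
    (hS : ∀ x ∈ Set.Icc (0:ℝ) T, ∀ y ∈ Set.Icc (0:ℝ) T, |S x - S y| ≤ D * |x - y| ^ α)
    (hπ : ∀ x ∈ Set.Icc (0:ℝ) T, ∀ y ∈ Set.Icc (0:ℝ) T, |π x - π y| ≤ C * |x - y| ^ γ)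
    (p : ℕ → ℝ) (N : ℕ) (R : ℕ → ℝ) (σ : ℕ → ℕ)
    (hσmono : ∀ i < N, σ i < σ (i + 1)) (hσ0 : σ 0 = 0)
    (hpR : ∀ i ≤ N, p i = R (σ i))
    (hplt : ∀ i < N, p i < p (i + 1))
    (hR : ∀ j < σ N, R j < R (j + 1)) (hRT : ∀ j ≤ σ N, R j ∈ Set.Icc (0:ℝ) T)
    (δ : ℝ) (hδpos : 0 < δ) (hδ : ∀ i < N, p (i + 1) - p i ≤ δ) :
    |(∑ j ∈ Finset.range (σ N), π (R j) * (S (R (j + 1)) - S (R j)))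
        - ∑ i ∈ Finset.range N, π (p i) * (S (p (i + 1)) - S (p i))|
      ≤ (C * D * 2 ^ (α + γ) * ((α + γ) / (α + γ - 1))) * δ ^ (α + γ - 1) * (p N - p 0) := by
  set K0 : ℝ := C * D * 2 ^ (α + γ) * ((α + γ) / (α + γ - 1)) with hK0
  have hK0nn : 0 ≤ K0 := by
    have h1 : (0:ℝ) < α + γ - 1 := by linarith
    have h2 : (0:ℝ) ≤ (α + γ) / (α + γ - 1) := by positivity
    rw [hK0]
    positivity
  set f : ℕ → ℝ := fun j => π (R j) * (S (R (j + 1)) - S (R j)) with hf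
  have hσle : ∀ i j : ℕ, i ≤ j → j ≤ N → σ i ≤ σ j := yk_monoN σ N hσmono
  have hblocks : ∑ j ∈ Finset.range (σ N), f j
      = ∑ i ∈ Finset.range N, ∑ j ∈ Finset.Ico (σ i) (σ (i + 1)), f j := by
    have h := yk_blocks f σ N hσmono
    rw [hσ0] at h
    rw [show Finset.range (σ N) = Finset.Ico 0 (σ N) by rw [Finset.range_eq_Ico]]
    exact h
  have hblock_est : ∀ i < N,
      |(∑ j ∈ Finset.Ico (σ i) (σ (i + 1)), f j) - π (p i) * (S (p (i + 1)) - S (p i))|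
        ≤ K0 * δ ^ (α + γ - 1) * (p (i + 1) - p i) := by
    intro i hi
    set ti : ℕ → ℝ := fun j => R (σ i + j) with hti
    set ni : ℕ := σ (i + 1) - σ i with hni
    have hσi1 : σ i + ni = σ (i + 1) := by
      have := hσmono i hi
      omega
    have hσiN : σ (i + 1) ≤ σ N := hσle (i + 1) N (by omega) (le_refl N)
    have hblock : ∑ j ∈ Finset.Ico (σ i) (σ (i + 1)), f j
        = ∑ j ∈ Finset.range ni, π (ti j) * (S (ti (j + 1)) - S (ti j)) := by
      rw [Finset.sum_Ico_eq_sum_range]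
      apply Finset.sum_congr (by congr 1)
      intro j _
      simp only [hf, hti]
      rw [Nat.add_assoc]
    have hti_mem : ∀ j ≤ ni, ti j ∈ Set.Icc (0:ℝ) T := by
      intro j hj
      exact hRT (σ i + j) (by omega)
    have hti_lt : ∀ j < ni, ti j < ti (j + 1) := by
      intro j hj
      exact hR (σ i + j) (by omega)
    have hloc := yk_local2 T S π C D α γ hC hD hα0 hγ0 hθ1 hθ2 hS hπ ni ti hti_mem hti_lt
    have hti0 : ti 0 = p i := by
      simp only [hti, Nat.add_zero]
      exact (hpR i (by omega)).symm
    have htin : ti ni = p (i + 1) := by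
      simp only [hti, hσi1]
      exact (hpR (i + 1) (by omega)).symm
    rw [hblock, ← hti0, ← htin]
    refine hloc.trans ?_
    rw [hti0, htin, ← hK0]
    have hΔpos : 0 < p (i + 1) - p i := by
      have := hplt i hi
      linarith
    have hΔδ : p (i + 1) - p i ≤ δ := hδ i hi
    have hsplit : (p (i + 1) - p i) ^ (α + γ)
        = (p (i + 1) - p i) ^ (α + γ - 1) * (p (i + 1) - p i) := by
      have h := Real.rpow_add hΔpos (α + γ - 1) 1
      have h2 : α + γ - 1 + 1 = α + γ := by ring
      rw [h2, Real.rpow_one] at h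
      exact h
    rw [hsplit]
    have hle : (p (i + 1) - p i) ^ (α + γ - 1) ≤ δ ^ (α + γ - 1) :=
      Real.rpow_le_rpow hΔpos.le hΔδ (by linarith)
    calc K0 * ((p (i + 1) - p i) ^ (α + γ - 1) * (p (i + 1) - p i))
        ≤ K0 * (δ ^ (α + γ - 1) * (p (i + 1) - p i)) := by
          apply mul_le_mul_of_nonneg_left _ hK0nn
          exact mul_le_mul_of_nonneg_right hle hΔpos.le
      _ = K0 * δ ^ (α + γ - 1) * (p (i + 1) - p i) := by ring
  calc |(∑ j ∈ Finset.range (σ N), f j)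
        - ∑ i ∈ Finset.range N, π (p i) * (S (p (i + 1)) - S (p i))|
      = |∑ i ∈ Finset.range N,
          ((∑ j ∈ Finset.Ico (σ i) (σ (i + 1)), f j) - π (p i) * (S (p (i + 1)) - S (p i)))| := by
        rw [hblocks, Finset.sum_sub_distrib]
    _ ≤ ∑ i ∈ Finset.range N,
          |(∑ j ∈ Finset.Ico (σ i) (σ (i + 1)), f j) - π (p i) * (S (p (i + 1)) - S (p i))| :=
        Finset.abs_sum_le_sum_abs _ _
    _ ≤ ∑ i ∈ Finset.range N, K0 * δ ^ (α + γ - 1) * (p (i + 1) - p i) :=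
        Finset.sum_le_sum (fun i hi => hblock_est i (Finset.mem_range.mp hi))
    _ = K0 * δ ^ (α + γ - 1) * (p N - p 0) := by
        rw [← Finset.mul_sum, Finset.sum_range_sub p N]

private lemma yk_common (T : ℝ) (p q : ℕ → ℝ) (N M : ℕ) (hN : 0 < N) (hM : 0 < M)
    (hp0 : p 0 = 0) (hpN : p N = T) (hpm : ∀ i < N, p i < p (i + 1))
    (hq0 : q 0 = 0) (hqM : q M = T) (hqm : ∀ i < M, q i < q (i + 1)) :
    ∃ (R : ℕ → ℝ) (σ τ : ℕ → ℕ),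
      σ 0 = 0 ∧ τ 0 = 0 ∧ σ N = τ M ∧
      (∀ i < N, σ i < σ (i + 1)) ∧ (∀ i < M, τ i < τ (i + 1)) ∧
      (∀ i ≤ N, p i = R (σ i)) ∧ (∀ i ≤ M, q i = R (τ i)) ∧
      (∀ j < σ N, R j < R (j + 1)) ∧ (∀ j ≤ σ N, R j ∈ Set.Icc (0:ℝ) T) := by
  classical
  set s : Finset ℝ :=
    ((Finset.range (N + 1)).image p) ∪ ((Finset.range (M + 1)).image q) with hs
  have hmem_p : ∀ i ≤ N, p i ∈ s := by
    intro i hi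
    exact Finset.mem_union_left _
      (Finset.mem_image.mpr ⟨i, Finset.mem_range.mpr (by omega), rfl⟩)
  have hmem_q : ∀ i ≤ M, q i ∈ s := by
    intro i hi
    exact Finset.mem_union_right _
      (Finset.mem_image.mpr ⟨i, Finset.mem_range.mpr (by omega), rfl⟩)
  have hIcc : ∀ x ∈ s, x ∈ Set.Icc (0:ℝ) T := by
    intro x hx
    rcases Finset.mem_union.mp hx with h | h
    · obtain ⟨i, hi, rfl⟩ := Finset.mem_image.mp h
      have hi' : i ≤ N := by have := Finset.mem_range.mp hi; omega
      constructor
      · rw [← hp0]; exact yk_mono p N hpm 0 i (by omega) hi'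
      · rw [← hpN]; exact yk_mono p N hpm i N hi' (le_refl N)
    · obtain ⟨i, hi, rfl⟩ := Finset.mem_image.mp h
      have hi' : i ≤ M := by have := Finset.mem_range.mp hi; omega
      constructor
      · rw [← hq0]; exact yk_mono q M hqm 0 i (by omega) hi'
      · rw [← hqM]; exact yk_mono q M hqm i M hi' (le_refl M)
  have hcard : 0 < s.card := Finset.card_pos.mpr ⟨0, by rw [← hp0]; exact hmem_p 0 (by omega)⟩
  set e := s.orderIsoOfFin rfl with he
  set R : ℕ → ℝ := fun j => (e ⟨min j (s.card - 1), by omega⟩ : ℝ) with hR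
  have hRval : ∀ j (h : j < s.card), R j = (e ⟨j, h⟩ : ℝ) := by
    intro j h
    have hm : min j (s.card - 1) = j := by omega
    simp only [hR]
    exact congrArg (fun z => (e z : ℝ)) (Fin.ext (by simp [hm]))
  set idx : ℝ → ℕ := fun x => if hx : x ∈ s then ((e.symm ⟨x, hx⟩ : Fin s.card) : ℕ) else 0
    with hidx
  have hidx_lt : ∀ x ∈ s, idx x < s.card := by
    intro x hx
    simp only [hidx, dif_pos hx]
    exact (e.symm ⟨x, hx⟩).isLt
  have hR_idx : ∀ x ∈ s, R (idx x) = x := by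
    intro x hx
    simp only [hidx, dif_pos hx]
    rw [hRval _ (e.symm ⟨x, hx⟩).isLt]
    exact congrArg Subtype.val
      ((congrArg e (Fin.ext rfl)).trans (e.apply_symm_apply ⟨x, hx⟩))
  have hidx_strict : ∀ x ∈ s, ∀ y ∈ s, x < y → idx x < idx y := by
    intro x hx y hy hxy
    simp only [hidx, dif_pos hx, dif_pos hy]
    have : e.symm ⟨x, hx⟩ < e.symm ⟨y, hy⟩ := e.symm.strictMono (Subtype.mk_lt_mk.mpr hxy)
    exact this
  have hidx_zero : (0:ℝ) ∈ s → idx 0 = 0 := by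
    intro hx
    by_contra hne
    have hpos : 0 < idx 0 := Nat.pos_of_ne_zero hne
    simp only [hidx, dif_pos hx] at hpos
    have h1 : (⟨0, hcard⟩ : Fin s.card) < e.symm ⟨(0:ℝ), hx⟩ := by
      rw [Fin.lt_def]; exact hpos
    have h2 : e ⟨0, hcard⟩ < e (e.symm ⟨(0:ℝ), hx⟩) := e.strictMono h1
    rw [OrderIso.apply_symm_apply] at h2
    have h3 : (e ⟨0, hcard⟩ : ℝ) < 0 := Subtype.coe_lt_coe.mpr h2
    have h4 := (hIcc _ (e ⟨0, hcard⟩).2).1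
    linarith
  have hidx_top : T ∈ s → idx T = s.card - 1 := by
    intro hx
    by_contra hne
    have hlt : idx T < s.card - 1 := by
      have := hidx_lt T hx
      omega
    simp only [hidx, dif_pos hx] at hlt
    have h1 : e.symm ⟨T, hx⟩ < (⟨s.card - 1, by omega⟩ : Fin s.card) := by
      rw [Fin.lt_def]; exact hlt
    have h2 : e (e.symm ⟨T, hx⟩) < e ⟨s.card - 1, by omega⟩ := e.strictMono h1
    rw [OrderIso.apply_symm_apply] at h2
    have h3 : T < (e ⟨s.card - 1, by omega⟩ : ℝ) := Subtype.coe_lt_coe.mpr h2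
    have h4 := (hIcc _ (e ⟨s.card - 1, by omega⟩).2).2
    linarith
  set σ : ℕ → ℕ := fun i => idx (p (min i N)) with hσ
  set τ : ℕ → ℕ := fun i => idx (q (min i M)) with hτ
  have hσeq : ∀ i, i ≤ N → σ i = idx (p i) := by
    intro i hi
    simp only [hσ, min_eq_left hi]
  have hτeq : ∀ i, i ≤ M → τ i = idx (q i) := by
    intro i hi
    simp only [hτ, min_eq_left hi]
  have hσ0' : σ 0 = 0 := by
    rw [hσeq 0 (by omega), hp0]
    exact hidx_zero (by rw [← hp0]; exact hmem_p 0 (by omega))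
  have hτ0' : τ 0 = 0 := by
    rw [hτeq 0 (by omega), hq0]
    exact hidx_zero (by rw [← hp0]; exact hmem_p 0 (by omega))
  have hσN' : σ N = s.card - 1 := by
    rw [hσeq N (le_refl N), hpN]
    exact hidx_top (by rw [← hpN]; exact hmem_p N (le_refl N))
  have hτM' : τ M = s.card - 1 := by
    rw [hτeq M (le_refl M), hqM]
    exact hidx_top (by rw [← hpN]; exact hmem_p N (le_refl N))
  refine ⟨R, σ, τ, hσ0', hτ0', by rw [hσN', hτM'], ?_, ?_, ?_, ?_, ?_, ?_⟩
  · intro i hi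
    rw [hσeq i (by omega), hσeq (i + 1) (by omega)]
    exact hidx_strict _ (hmem_p i (by omega)) _ (hmem_p (i + 1) (by omega)) (hpm i hi)
  · intro i hi
    rw [hτeq i (by omega), hτeq (i + 1) (by omega)]
    exact hidx_strict _ (hmem_q i (by omega)) _ (hmem_q (i + 1) (by omega)) (hqm i hi)
  · intro i hi
    rw [hσeq i hi, hR_idx _ (hmem_p i hi)]
  · intro i hi
    rw [hτeq i hi, hR_idx _ (hmem_q i hi)]
  · intro j hj
    rw [hσN'] at hj
    rw [hRval j (by omega), hRval (j + 1) (by omega)]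
    have h1 : (⟨j, by omega⟩ : Fin s.card) < ⟨j + 1, by omega⟩ :=
      Fin.mk_lt_mk.mpr (Nat.lt_succ_self j)
    exact Subtype.coe_lt_coe.mpr (e.strictMono h1)
  · intro j hj
    rw [hσN'] at hj
    rw [hRval j (by omega)]
    exact hIcc _ (e ⟨j, by omega⟩).2

private lemma yk_two (T : ℝ) (S π : ℝ → ℝ) (C D α γ : ℝ) (hC : 0 ≤ C) (hD : 0 ≤ D)
    (hα0 : 0 < α) (hγ0 : 0 < γ) (hθ1 : 1 < α + γ) (hθ2 : α + γ ≤ 2)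
    (hS : ∀ x ∈ Set.Icc (0:ℝ) T, ∀ y ∈ Set.Icc (0:ℝ) T, |S x - S y| ≤ D * |x - y| ^ α)
    (hπ : ∀ x ∈ Set.Icc (0:ℝ) T, ∀ y ∈ Set.Icc (0:ℝ) T, |π x - π y| ≤ C * |x - y| ^ γ)
    (p : ℕ → ℝ) (N : ℕ) (hN : 0 < N) (hp0 : p 0 = 0) (hpN : p N = T)
    (hpm : ∀ i < N, p i < p (i + 1))
    (δ1 : ℝ) (hδ1pos : 0 < δ1) (hδ1 : ∀ i < N, p (i + 1) - p i ≤ δ1)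
    (q : ℕ → ℝ) (M : ℕ) (hM : 0 < M) (hq0 : q 0 = 0) (hqM : q M = T)
    (hqm : ∀ i < M, q i < q (i + 1))
    (δ2 : ℝ) (hδ2pos : 0 < δ2) (hδ2 : ∀ i < M, q (i + 1) - q i ≤ δ2) :
    |(∑ i ∈ Finset.range N, π (p i) * (S (p (i + 1)) - S (p i)))
        - ∑ i ∈ Finset.range M, π (q i) * (S (q (i + 1)) - S (q i))|
      ≤ (C * D * 2 ^ (α + γ) * ((α + γ) / (α + γ - 1)))
          * (δ1 ^ (α + γ - 1) + δ2 ^ (α + γ - 1)) * T := by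
  obtain ⟨R, σ, τ, hσ0, hτ0, hστ, hσm, hτm, hpR, hqR, hRlt, hRT⟩ :=
    yk_common T p q N M hN hM hp0 hpN hpm hq0 hqM hqm
  have h1 := yk_refine T S π C D α γ hC hD hα0 hγ0 hθ1 hθ2 hS hπ p N R σ hσm hσ0 hpR hpm
    hRlt hRT δ1 hδ1pos hδ1
  have hRlt' : ∀ j < τ M, R j < R (j + 1) := by rw [← hστ]; exact hRlt
  have hRT' : ∀ j ≤ τ M, R j ∈ Set.Icc (0:ℝ) T := by rw [← hστ]; exact hRT
  have h2 := yk_refine T S π C D α γ hC hD hα0 hγ0 hθ1 hθ2 hS hπ q M R τ hτm hτ0 hqR hqm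
    hRlt' hRT' δ2 hδ2pos hδ2
  rw [hστ] at h1
  rw [hp0, hpN] at h1
  rw [hq0, hqM] at h2
  set SR := ∑ j ∈ Finset.range (τ M), π (R j) * (S (R (j + 1)) - S (R j)) with hSR
  set Sp := ∑ i ∈ Finset.range N, π (p i) * (S (p (i + 1)) - S (p i)) with hSp
  set Sq := ∑ i ∈ Finset.range M, π (q i) * (S (q (i + 1)) - S (q i)) with hSq
  have tri : |Sp - Sq| ≤ |SR - Sp| + |SR - Sq| := by
    have : Sp - Sq = -(SR - Sp) + (SR - Sq) := by ring
    rw [this]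
    exact (abs_add_le _ _).trans (by rw [abs_neg])
  refine tri.trans ?_
  have := add_le_add h1 h2
  calc |SR - Sp| + |SR - Sq|
      ≤ C * D * 2 ^ (α + γ) * ((α + γ) / (α + γ - 1)) * δ1 ^ (α + γ - 1) * (T - 0)
        + C * D * 2 ^ (α + γ) * ((α + γ) / (α + γ - 1)) * δ2 ^ (α + γ - 1) * (T - 0) := this
    _ = (C * D * 2 ^ (α + γ) * ((α + γ) / (α + γ - 1)))
          * (δ1 ^ (α + γ - 1) + δ2 ^ (α + γ - 1)) * T := by ring


/-- **Young–Kondurar theorem.** If `S` is `α`-Hölder continuous and `π` is `γ`-Hölder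
continuous on `[0, T]` with `γ > 1 - α`, then the Riemann–Stieltjes integral
`∫₀ᵀ π dS` exists as a limit of Riemann–Stieltjes sums: there is a real number `I`
such that for every `ε > 0` there is `δ > 0` such that every tagged partition
`0 = t₀ < t₁ < ⋯ < tₙ = T` of mesh `< δ` with tags `ξᵢ ∈ [tᵢ, tᵢ₊₁]` satisfies
`|∑ π(ξᵢ)(S(tᵢ₊₁) - S(tᵢ)) - I| < ε`. -/
theorem young_kondurar
    (T : ℝ) (hT : 0 < T)
    (α γ : ℝ) (hα0 : 0 < α) (hα1 : α ≤ 1) (hγ0 : 0 < γ) (hγ1 : γ ≤ 1)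
    (hαγ : γ > 1 - α)
    (S π : ℝ → ℝ)
    (hS : ∃ C : ℝ, 0 ≤ C ∧ ∀ x ∈ Set.Icc (0 : ℝ) T, ∀ y ∈ Set.Icc (0 : ℝ) T,
        |S x - S y| ≤ C * |x - y| ^ α)
    (hπ : ∃ C : ℝ, 0 ≤ C ∧ ∀ x ∈ Set.Icc (0 : ℝ) T, ∀ y ∈ Set.Icc (0 : ℝ) T,
        |π x - π y| ≤ C * |x - y| ^ γ) :
    ∃ I : ℝ, ∀ ε > (0 : ℝ), ∃ δ > (0 : ℝ), ∀ (n : ℕ) (t ξ : ℕ → ℝ),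
      0 < n → t 0 = 0 → t n = T →
      (∀ i < n, t i < t (i + 1)) →
      (∀ i < n, t (i + 1) - t i < δ) →
      (∀ i < n, ξ i ∈ Set.Icc (t i) (t (i + 1))) →
      |(∑ i ∈ Finset.range n, π (ξ i) * (S (t (i + 1)) - S (t i))) - I| < ε := by
  obtain ⟨D, hD, hS'⟩ := hS
  obtain ⟨C, hC, hπ'⟩ := hπ
  have hθ1 : 1 < α + γ := by linarith
  have hθ2 : α + γ ≤ 2 := by linarith
  set K0 : ℝ := C * D * 2 ^ (α + γ) * ((α + γ) / (α + γ - 1)) with hK0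
  have hK0nn : 0 ≤ K0 := by
    have h1 : (0:ℝ) < α + γ - 1 := by linarith
    have h2 : (0:ℝ) ≤ (α + γ) / (α + γ - 1) := by positivity
    rw [hK0]; positivity
  -- the dyadic uniform partitions
  set u : ℕ → ℕ → ℝ := fun m i => (i : ℝ) * T / 2 ^ m with hu
  have hu0 : ∀ m, u m 0 = 0 := by intro m; simp [hu]
  have huend : ∀ m, u m (2 ^ m) = T := by
    intro m
    simp only [hu]
    rw [Nat.cast_pow]
    field_simp
    norm_num
  have humesh : ∀ m i, u m (i + 1) - u m i = T / 2 ^ m := by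
    intro m i
    simp only [hu]
    push_cast
    ring
  have humono : ∀ m, ∀ i < 2 ^ m, u m i < u m (i + 1) := by
    intro m i _
    have h := humesh m i
    have : (0:ℝ) < T / 2 ^ m := by positivity
    linarith
  set A : ℕ → ℝ := fun m => ∑ i ∈ Finset.range (2 ^ m),
    π (u m i) * (S (u m (i + 1)) - S (u m i)) with hA
  have hmesh_le : ∀ m mm : ℕ, m ≤ mm → T / 2 ^ mm ≤ T / 2 ^ m := by
    intro m mm h
    apply div_le_div_of_nonneg_left hT.le (by positivity)
    exact pow_le_pow_right₀ (by norm_num) h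
  have hmeshpos : ∀ m : ℕ, (0:ℝ) < T / 2 ^ m := fun m => by positivity
  -- Cauchy estimate
  have hAdist : ∀ m mm MM : ℕ, MM ≤ m → MM ≤ mm →
      dist (A m) (A mm) ≤ 2 * K0 * T * (T / 2 ^ MM) ^ (α + γ - 1) := by
    intro m mm MM h1 h2
    rw [Real.dist_eq]
    have := yk_two T S π C D α γ hC hD hα0 hγ0 hθ1 hθ2 hS' hπ'
      (u m) (2 ^ m) (by positivity) (hu0 m) (huend m) (humono m)
      (T / 2 ^ MM) (hmeshpos MM)
      (fun i _ => by rw [humesh m i]; exact hmesh_le MM m h1)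
      (u mm) (2 ^ mm) (by positivity) (hu0 mm) (huend mm) (humono mm)
      (T / 2 ^ MM) (hmeshpos MM)
      (fun i _ => by rw [humesh mm i]; exact hmesh_le MM mm h2)
    refine this.trans (le_of_eq ?_)
    rw [← hK0]
    ring
  -- geometric decay of the bound
  set r : ℝ := ((1:ℝ)/2) ^ (α + γ - 1) with hr
  have hr0 : 0 ≤ r := Real.rpow_nonneg (by norm_num) _
  have hr1 : r < 1 := Real.rpow_lt_one (by norm_num) (by norm_num) (by linarith)
  have hgeom : ∀ m : ℕ, (T / 2 ^ m) ^ (α + γ - 1) = T ^ (α + γ - 1) * r ^ m := by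
    intro m
    have h1 : T / 2 ^ m = T * ((1:ℝ)/2) ^ m := by
      rw [div_pow, one_pow]
      ring
    rw [h1, Real.mul_rpow hT.le (by positivity)]
    congr 1
    rw [← Real.rpow_natCast ((1:ℝ)/2) m, ← Real.rpow_natCast r m, hr,
      ← Real.rpow_mul (by norm_num), ← Real.rpow_mul (by norm_num)]
    congr 1
    ring
  have htend : Filter.Tendsto (fun m : ℕ => 2 * K0 * T * (T / 2 ^ m) ^ (α + γ - 1))
      Filter.atTop (nhds 0) := by
    have h1 : (fun m : ℕ => 2 * K0 * T * (T / 2 ^ m) ^ (α + γ - 1))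
        = fun m : ℕ => (2 * K0 * T * T ^ (α + γ - 1)) * r ^ m := by
      funext m
      rw [hgeom m]
      ring
    rw [h1]
    have h2 := tendsto_pow_atTop_nhds_zero_of_lt_one hr0 hr1
    have h3 := h2.const_mul (2 * K0 * T * T ^ (α + γ - 1))
    simpa using h3
  have hcauchy : CauchySeq A :=
    cauchySeq_of_le_tendsto_0 _ hAdist htend
  obtain ⟨I, hI⟩ := cauchySeq_tendsto_of_complete hcauchy
  refine ⟨I, fun ε hε => ?_⟩
  -- choose m with both smallness conditions
  have htend2 : Filter.Tendsto
      (fun m : ℕ => (C * D * T + 2 * K0 * T) * (T / 2 ^ m) ^ (α + γ - 1))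
      Filter.atTop (nhds 0) := by
    have h1 : (fun m : ℕ => (C * D * T + 2 * K0 * T) * (T / 2 ^ m) ^ (α + γ - 1))
        = fun m : ℕ => ((C * D * T + 2 * K0 * T) * T ^ (α + γ - 1)) * r ^ m := by
      funext m
      rw [hgeom m]
      ring
    rw [h1]
    have h2 := (tendsto_pow_atTop_nhds_zero_of_lt_one hr0 hr1).const_mul
      ((C * D * T + 2 * K0 * T) * T ^ (α + γ - 1))
    simpa using h2
  obtain ⟨M1, hM1⟩ := Metric.tendsto_atTop.mp hI (ε / 2) (by linarith)
  have hev := htend2.eventually (gt_mem_nhds (show (0:ℝ) < ε / 2 by linarith))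
  obtain ⟨M2, hM2⟩ := Filter.eventually_atTop.mp hev
  set m : ℕ := max M1 M2 with hm
  set δ : ℝ := T / 2 ^ m with hδ
  have hδpos : 0 < δ := hmeshpos m
  refine ⟨δ, hδpos, ?_⟩
  intro n t ξ hn ht0 htn htlt htmesh hξ
  -- membership of partition points
  have htmem : ∀ i ≤ n, t i ∈ Set.Icc (0:ℝ) T := by
    intro i hi
    constructor
    · rw [← ht0]; exact yk_mono t n htlt 0 i (by omega) hi
    · rw [← htn]; exact yk_mono t n htlt i n hi (le_refl n)
  -- tag replacement error
  have htag : |(∑ i ∈ Finset.range n, π (ξ i) * (S (t (i + 1)) - S (t i)))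
      - ∑ i ∈ Finset.range n, π (t i) * (S (t (i + 1)) - S (t i))|
      ≤ C * D * δ ^ (α + γ - 1) * T := by
    have hterm : ∀ i < n,
        |π (ξ i) * (S (t (i + 1)) - S (t i)) - π (t i) * (S (t (i + 1)) - S (t i))|
          ≤ C * D * δ ^ (α + γ - 1) * (t (i + 1) - t i) := by
      intro i hi
      have hΔpos : 0 < t (i + 1) - t i := by have := htlt i hi; linarith
      have hΔδ : t (i + 1) - t i ≤ δ := (htmesh i hi).le
      have hξi := hξ i hi
      have hξmem : ξ i ∈ Set.Icc (0:ℝ) T := by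
        constructor
        · exact le_trans (htmem i (by omega)).1 hξi.1
        · exact le_trans hξi.2 (htmem (i + 1) (by omega)).2
      have hπi : |π (ξ i) - π (t i)| ≤ C * (t (i + 1) - t i) ^ γ := by
        refine (hπ' (ξ i) hξmem (t i) (htmem i (by omega))).trans ?_
        apply mul_le_mul_of_nonneg_left _ hC
        rw [abs_of_nonneg (by linarith [hξi.1] : (0:ℝ) ≤ ξ i - t i)]
        exact Real.rpow_le_rpow (by linarith [hξi.1]) (by linarith [hξi.2]) hγ0.le
      have hSi : |S (t (i + 1)) - S (t i)| ≤ D * (t (i + 1) - t i) ^ α := by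
        refine (hS' (t (i + 1)) (htmem (i + 1) (by omega)) (t i) (htmem i (by omega))).trans ?_
        apply mul_le_mul_of_nonneg_left _ hD
        rw [abs_of_pos hΔpos]
      have hprod : |π (ξ i) - π (t i)| * |S (t (i + 1)) - S (t i)|
          ≤ C * D * (t (i + 1) - t i) ^ (α + γ) := by
        calc |π (ξ i) - π (t i)| * |S (t (i + 1)) - S (t i)|
            ≤ (C * (t (i + 1) - t i) ^ γ) * (D * (t (i + 1) - t i) ^ α) :=
              mul_le_mul hπi hSi (abs_nonneg _) (by positivity)
          _ = C * D * (t (i + 1) - t i) ^ (α + γ) := by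
              rw [Real.rpow_add hΔpos]; ring
      have hsplit : (t (i + 1) - t i) ^ (α + γ)
          = (t (i + 1) - t i) ^ (α + γ - 1) * (t (i + 1) - t i) := by
        have h := Real.rpow_add hΔpos (α + γ - 1) 1
        have h2 : α + γ - 1 + 1 = α + γ := by ring
        rw [h2, Real.rpow_one] at h
        exact h
      calc |π (ξ i) * (S (t (i + 1)) - S (t i)) - π (t i) * (S (t (i + 1)) - S (t i))|
          = |π (ξ i) - π (t i)| * |S (t (i + 1)) - S (t i)| := by
            rw [← abs_mul]; congr 1; ring
        _ ≤ C * D * (t (i + 1) - t i) ^ (α + γ) := hprod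
        _ = C * D * ((t (i + 1) - t i) ^ (α + γ - 1) * (t (i + 1) - t i)) := by
            rw [hsplit]
        _ ≤ C * D * (δ ^ (α + γ - 1) * (t (i + 1) - t i)) := by
            apply mul_le_mul_of_nonneg_left _ (by positivity)
            apply mul_le_mul_of_nonneg_right _ hΔpos.le
            exact Real.rpow_le_rpow hΔpos.le hΔδ (by linarith)
        _ = C * D * δ ^ (α + γ - 1) * (t (i + 1) - t i) := by ring
    calc |(∑ i ∈ Finset.range n, π (ξ i) * (S (t (i + 1)) - S (t i)))
        - ∑ i ∈ Finset.range n, π (t i) * (S (t (i + 1)) - S (t i))|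
        = |∑ i ∈ Finset.range n, (π (ξ i) * (S (t (i + 1)) - S (t i))
            - π (t i) * (S (t (i + 1)) - S (t i)))| := by rw [Finset.sum_sub_distrib]
      _ ≤ ∑ i ∈ Finset.range n, |π (ξ i) * (S (t (i + 1)) - S (t i))
            - π (t i) * (S (t (i + 1)) - S (t i))| := Finset.abs_sum_le_sum_abs _ _
      _ ≤ ∑ i ∈ Finset.range n, C * D * δ ^ (α + γ - 1) * (t (i + 1) - t i) :=
          Finset.sum_le_sum (fun i hi => hterm i (Finset.mem_range.mp hi))
      _ = C * D * δ ^ (α + γ - 1) * (t n - t 0) := by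
          rw [← Finset.mul_sum, Finset.sum_range_sub t n]
      _ = C * D * δ ^ (α + γ - 1) * T := by rw [ht0, htn, sub_zero]
  -- comparison with the dyadic partition
  have hcomp := yk_two T S π C D α γ hC hD hα0 hγ0 hθ1 hθ2 hS' hπ'
    t n hn ht0 htn htlt δ hδpos (fun i hi => (htmesh i hi).le)
    (u m) (2 ^ m) (by positivity) (hu0 m) (huend m) (humono m)
    δ hδpos (fun i _ => by rw [humesh m i])
  rw [← hK0] at hcomp
  have hAm : dist (A m) I < ε / 2 := hM1 m (le_max_left _ _)
  have hmain : (C * D * T + 2 * K0 * T) * δ ^ (α + γ - 1) < ε / 2 := by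
    have := hM2 m (le_max_right _ _)
    rw [← hδ] at this
    exact this
  have habs : |A m - I| < ε / 2 := by rw [← Real.dist_eq]; exact hAm
  have hδnn : 0 ≤ δ ^ (α + γ - 1) := Real.rpow_nonneg hδpos.le _
  calc |(∑ i ∈ Finset.range n, π (ξ i) * (S (t (i + 1)) - S (t i))) - I|
      ≤ |(∑ i ∈ Finset.range n, π (ξ i) * (S (t (i + 1)) - S (t i)))
          - ∑ i ∈ Finset.range n, π (t i) * (S (t (i + 1)) - S (t i))|
        + |(∑ i ∈ Finset.range n, π (t i) * (S (t (i + 1)) - S (t i))) - A m|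
        + |A m - I| := by
        have h1 : (∑ i ∈ Finset.range n, π (ξ i) * (S (t (i + 1)) - S (t i))) - I
            = ((∑ i ∈ Finset.range n, π (ξ i) * (S (t (i + 1)) - S (t i)))
                - ∑ i ∈ Finset.range n, π (t i) * (S (t (i + 1)) - S (t i)))
              + ((∑ i ∈ Finset.range n, π (t i) * (S (t (i + 1)) - S (t i))) - A m)
              + (A m - I) := by ring
        rw [h1]
        exact (abs_add_le _ _).trans (add_le_add_left (abs_add_le _ _) _)
    _ ≤ (C * D * δ ^ (α + γ - 1) * T) + (K0 * (δ ^ (α + γ - 1) + δ ^ (α + γ - 1)) * T)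
        + ε / 2 := by
        refine add_le_add (add_le_add htag ?_) habs.le
        exact hcomp
    _ = (C * D * T + 2 * K0 * T) * δ ^ (α + γ - 1) + ε / 2 := by ring
    _ < ε / 2 + ε / 2 := by linarith [hmain]
    _ = ε := by ring
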